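/- arXiv:math/0411387 — 3 statements merged into one kernel-verified Lean document; each statement's English description precedes it below -/
import Mathlib

section
/- Let π and ρ be nondecreasing parking functions of length n, and let c, c' be parking functions of length n with c↑ = c'↑. Then #{ (a,b) ∈ PF_n × PF_n : a↑ = π, b↑ = ρ, a*b = c } = #{ (a,b) ∈ PF_n × PF_n : a↑ = π, b↑ = ρ, a*b = c' }. (Equivalently, the homogeneous components CQSym_n of the Catalan algebra, spanned by the class sums P^π = Σ_{a↑=π} F_a, are stable under the internal product *.) -/
open List

/-- `sortW w` is the nondecreasing rearrangement `w↑` of the word `w`. -/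
def sortW (w : List ℕ) : List ℕ := w.mergeSort (fun a b => decide (a ≤ b))

/-- `a` is a parking function: a word over the positive integers whose
nondecreasing rearrangement `a↑ = a'₁ ⋯ a'ₙ` satisfies `a'ᵢ ≤ i` for all `i`. -/
def IsPF (a : List ℕ) : Prop :=
  (∀ x ∈ a, 1 ≤ x) ∧ ∀ i, i < a.length → (sortW a).getD i 0 ≤ i + 1

/-- `dW w = min { i ≥ 1 : #{j : wⱼ ≤ i} < i }`. -/
noncomputable def dW (w : List ℕ) : ℕ := sInf {i | 1 ≤ i ∧ w.countP (fun x => decide (x ≤ i)) < i}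

/-- Decrement by one every letter strictly greater than `d`. -/
def decAbove (d : ℕ) (w : List ℕ) : List ℕ := w.map (fun x => if d < x then x - 1 else x)

lemma mem_dW_set (w : List ℕ) :
    (w.length + 1) ∈ {i | 1 ≤ i ∧ w.countP (fun x => decide (x ≤ i)) < i} := by
  refine ⟨by omega, ?_⟩
  have : w.countP (fun x => decide (x ≤ w.length + 1)) ≤ w.length := List.countP_le_length
  omega

lemma decAbove_sum_lt {w : List ℕ} (h : dW w ≠ w.length + 1) :
    (decAbove (dW w) w).sum < w.sum := by
  have hmem : 1 ≤ dW w ∧ w.countP (fun x => decide (x ≤ dW w)) < dW w := Nat.sInf_mem (⟨_, mem_dW_set w⟩ : Set.Nonempty _)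
  have hle : dW w ≤ w.length + 1 := Nat.sInf_le (mem_dW_set w)
  obtain ⟨h1, h2⟩ := hmem
  have hlen : dW w ≤ w.length := by omega
  -- there is a letter strictly greater than `dW w`
  have hx : ∃ x ∈ w, ¬ (x ≤ dW w) := by
    by_contra hc
    push_neg at hc
    have : w.countP (fun x => decide (x ≤ dW w)) = w.length := by
      rw [List.countP_eq_length]
      intro a ha
      simpa using hc a ha
    omega
  obtain ⟨x, hxw, hxd⟩ := hx
  have := List.sum_lt_sum (l := w) (f := fun y => if dW w < y then y - 1 else y) (g := id)
    (fun i _ => by dsimp; split <;> omega)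
    ⟨x, hxw, by dsimp; rw [if_pos (by omega)]; omega⟩
  simpa [decAbove] using this

/-- The parkization `Park(w)` of a word `w` over the positive integers. -/
noncomputable def park (w : List ℕ) : List ℕ :=
  if h : dW w = w.length + 1 then w
  else
    have : (decAbove (dW w) w).sum < w.sum := decAbove_sum_lt h
    park (decAbove (dW w) w)
termination_by w.sum

/-- The standardization `Std(w)`: its `i`-th letter is `#{j : wⱼ ≤ wᵢ}`. -/
def stdW (w : List ℕ) : List ℕ := w.map (fun x => w.countP (fun y => decide (y ≤ x)))

/-- `v[k]`: shift every letter of `v` by `k`. -/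
def shiftW (k : ℕ) (v : List ℕ) : List ℕ := v.map (· + k)

/-- Shifted concatenation `u • v = u · v[k]`, `k = |u|`. -/
def sconc (u v : List ℕ) : List ℕ := u ++ shiftW u.length v

/-- The multiset of all shuffles of two words, counted with multiplicity. -/
def shuffles : List ℕ → List ℕ → Multiset (List ℕ)
  | [], v => {v}
  | x :: u, [] => {x :: u}
  | x :: u, y :: v =>
      (shuffles u (y :: v)).map (fun w => x :: w) + (shuffles (x :: u) v).map (fun w => y :: w)
termination_by u v => u.length + v.length

/-- Shifted shuffle `u ⋒ v`, a multiset of words. -/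
def sshuffle (u v : List ℕ) : Multiset (List ℕ) := shuffles u (shiftW u.length v)

/-- Iterated shifted shuffle `u₁ ⋒ u₂ ⋒ ⋯ ⋒ u_r`. -/
def itersShuffle : List (List ℕ) → Multiset (List ℕ)
  | [] => {[]}
  | u :: rest => (itersShuffle rest).bind (fun v => sshuffle u v)

/-- Lexicographic pair-encoding `a ⊛ b` of two words of length `n` with letters in `[n]`:
the `i`-th letter is `(aᵢ - 1)·n + bᵢ`. -/
def pairEnc (n : ℕ) (a b : List ℕ) : List ℕ := List.zipWith (fun x y => (x - 1) * n + y) a b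

/-- The internal product `a * b := Park(a ⊛ b)` of two parking functions of the same length. -/
noncomputable def iprod (a b : List ℕ) : List ℕ := park (pairEnc a.length a b)

/-- The word `1^m` of length `m` with all letters equal to `1`. -/
def onesW (m : ℕ) : List ℕ := List.replicate m 1

/-- The multiset (without repetition) of all words `a` with `a↑ = π`. -/
def classM (π : List ℕ) : Multiset (List ℕ) :=
  (↑(π.permutations.dedup) : Multiset (List ℕ)).filter (fun a => sortW a = π)

open Classical in
/-- The finite set of all parking functions of length `n`. -/
noncomputable def PFfin (n : ℕ) : Finset (List ℕ) :=
  ((Finset.univ : Finset (Fin n → Fin n)).image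
    (fun f => List.ofFn (fun i => (f i : ℕ) + 1))).filter IsPF

/-- Split a word into consecutive factors of the given lengths. -/
def splitFactors : List ℕ → List ℕ → List (List ℕ)
  | [], _ => []
  | k :: ks, e => e.take k :: splitFactors ks (e.drop k)

/-- Iterated shifted concatenation. -/
def sconcAll : List (List ℕ) → List ℕ
  | [] => []
  | u :: rest => sconc u (sconcAll rest)

/-- Multiset of tuples `(a₁, …, a_r)` (as lists) with `aᵢ↑ = πᵢ`. -/
def tuplesM : List (List ℕ) → Multiset (List (List ℕ))
  | [] => {[]}
  | p :: ps => (classM p).bind (fun a => (tuplesM ps).map (fun A => a :: A))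

/-- `π'` is a successor of `π`: the evaluation of `π'` is obtained from that of `π`
by merging two consecutive (modulo zeros) nonzero entries onto the left one. -/
def IsSuccEv (π π' : List ℕ) : Prop :=
  ∃ i j : ℕ, 1 ≤ i ∧ i < j ∧ π.count i ≠ 0 ∧ π.count j ≠ 0 ∧
    (∀ k, i < k → k < j → π.count k = 0) ∧
    (∀ m, π'.count m = if m = i then π.count i + π.count j else if m = j then 0 else π.count m)

/-- The partial order `π ⪯ π'`: reflexive–transitive closure of the successor relation. -/
def succeq (π π' : List ℕ) : Prop := Relation.ReflTransGen IsSuccEv π π'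

section Aux

/-- Apply a permutation of positions to a word. -/
noncomputable def permE (n : ℕ) (τ : Equiv.Perm (Fin n)) (w : List ℕ) : List ℕ :=
  List.ofFn (fun i => w.getD (τ i) 0)

@[simp] lemma length_permE (n τ w) : (permE n τ w).length = n := by simp [permE]

lemma park_unfold (w : List ℕ) :
    park w = if dW w = w.length + 1 then w else park (decAbove (dW w) w) := by
  rw [park]
  split <;> simp_all

lemma ofFn_getD_eq {n : ℕ} {w : List ℕ} (h : w.length = n) :
    List.ofFn (fun i : Fin n => w.getD (i : ℕ) 0) = w := by
  apply List.ext_getElem (by simp [h])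
  intro i h1 h2
  simp only [List.getElem_ofFn]
  exact List.getD_eq_getElem _ _ h2

lemma permE_perm {n : ℕ} (τ : Equiv.Perm (Fin n)) {w : List ℕ} (h : w.length = n) :
    permE n τ w ~ w := by
  have : permE n τ w = List.ofFn ((fun i : Fin n => w.getD (i : ℕ) 0) ∘ τ) := rfl
  rw [this]
  exact (τ.ofFn_comp_perm _).trans (by rw [ofFn_getD_eq h])

lemma getElem_permE (n τ w) (i : ℕ) (hi : i < (permE n τ w).length) :
    (permE n τ w)[i] = w.getD (τ ⟨i, by simpa using hi⟩) 0 := by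
  simp [permE]

lemma permE_permE (n : ℕ) (σ τ : Equiv.Perm (Fin n)) (w : List ℕ) :
    permE n σ (permE n τ w) = permE n (σ.trans τ) w := by
  apply List.ext_getElem (by simp)
  intro i h1 h2
  rw [getElem_permE, getElem_permE]
  rw [List.getD_eq_getElem _ _ (by simp), getElem_permE]
  rfl

lemma permE_refl {n : ℕ} {w : List ℕ} (h : w.length = n) :
    permE n (Equiv.refl _) w = w := by
  simpa [permE] using ofFn_getD_eq h

lemma countP_permE {n : ℕ} (τ : Equiv.Perm (Fin n)) {w : List ℕ} (h : w.length = n)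
    (p : ℕ → Bool) : (permE n τ w).countP p = w.countP p :=
  (permE_perm τ h).countP_eq p

lemma dW_permE {n : ℕ} (τ : Equiv.Perm (Fin n)) {w : List ℕ} (h : w.length = n) :
    dW (permE n τ w) = dW w := by
  unfold dW
  congr 1
  ext i
  simp [countP_permE τ h]

lemma decAbove_permE {n : ℕ} (τ : Equiv.Perm (Fin n)) {w : List ℕ} (h : w.length = n) (d : ℕ) :
    decAbove d (permE n τ w) = permE n τ (decAbove d w) := by
  apply List.ext_getElem (by simp [decAbove])
  intro i h1 h2
  have hlt : (τ ⟨i, by simpa [decAbove] using h1⟩ : ℕ) < w.length := by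
    rw [h]; exact (τ _).isLt
  simp only [decAbove, List.getElem_map, getElem_permE]
  rw [List.getD_eq_getElem _ _ hlt, List.getD_eq_getElem _ _ (by simpa [decAbove] using hlt),
    List.getElem_map]

lemma park_permE {n : ℕ} (τ : Equiv.Perm (Fin n)) :
    ∀ s (w : List ℕ), w.sum ≤ s → w.length = n → park (permE n τ w) = permE n τ (park w) := by
  intro s
  induction s with
  | zero =>
    intro w hs h
    have hd : dW (permE n τ w) = dW w := dW_permE τ h
    by_cases hb : dW w = w.length + 1
    · rw [park_unfold (permE n τ w), park_unfold w, if_pos hb, if_pos (by simp [hd, hb, h])]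
    · exfalso
      have := decAbove_sum_lt hb
      omega
  | succ m ih =>
    intro w hs h
    have hd : dW (permE n τ w) = dW w := dW_permE τ h
    by_cases hb : dW w = w.length + 1
    · rw [park_unfold (permE n τ w), park_unfold w, if_pos hb, if_pos (by simp [hd, hb, h])]
    · rw [park_unfold w, park_unfold (permE n τ w), if_neg hb,
        if_neg (by simp only [hd, length_permE, h]; omega)]
      rw [hd, decAbove_permE τ h]
      exact ih _ (by have := decAbove_sum_lt hb; omega) (by simp [decAbove, h])

lemma sortW_sorted (w : List ℕ) : (sortW w).Pairwise (· ≤ ·) := by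
  have := List.pairwise_mergeSort (le := fun a b : ℕ => decide (a ≤ b))
    (by intro a b c; simp; omega) (by intro a b; simp; omega) w
  exact this.imp (by simp)

lemma sortW_perm (w : List ℕ) : sortW w ~ w := List.mergeSort_perm w _

lemma sortW_eq_of_perm {w w' : List ℕ} (h : w ~ w') : sortW w = sortW w' :=
  List.Perm.eq_of_pairwise' (sortW_sorted w) (sortW_sorted w')
    ((sortW_perm w).trans (h.trans (sortW_perm w').symm))

lemma sortW_permE {n : ℕ} (τ : Equiv.Perm (Fin n)) {w : List ℕ} (h : w.length = n) :
    sortW (permE n τ w) = sortW w := sortW_eq_of_perm (permE_perm τ h)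

lemma IsPF_permE {n : ℕ} (τ : Equiv.Perm (Fin n)) {w : List ℕ} (h : w.length = n) :
    IsPF (permE n τ w) ↔ IsPF w := by
  unfold IsPF
  rw [sortW_permE τ h, length_permE, h]
  constructor
  · rintro ⟨h1, h2⟩
    exact ⟨fun x hx => h1 x ((permE_perm τ h).mem_iff.2 hx), h2⟩
  · rintro ⟨h1, h2⟩
    exact ⟨fun x hx => h1 x ((permE_perm τ h).mem_iff.1 hx), h2⟩

lemma pairEnc_permE {n : ℕ} (τ : Equiv.Perm (Fin n)) {a b : List ℕ}
    (ha : a.length = n) (hb : b.length = n) :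
    pairEnc n (permE n τ a) (permE n τ b) = permE n τ (pairEnc n a b) := by
  have key : ∀ j : ℕ, j < n →
      (List.zipWith (fun x y => (x - 1) * n + y) a b).getD j 0 =
        (a.getD j 0 - 1) * n + b.getD j 0 := by
    intro j hj
    rw [List.getD_eq_getElem _ _ (by simp [ha, hb]; omega),
      List.getD_eq_getElem _ _ (by omega), List.getD_eq_getElem _ _ (by omega),
      List.getElem_zipWith]
  apply List.ext_getElem (by simp [pairEnc, ha, hb])
  intro i h1 h2
  have hin : i < n := by simpa using h2
  simp only [pairEnc, List.getElem_zipWith, permE, List.getElem_ofFn]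
  exact (key _ (τ _).isLt).symm

lemma iprod_permE {n : ℕ} (τ : Equiv.Perm (Fin n)) {a b : List ℕ}
    (ha : a.length = n) (hb : b.length = n) :
    iprod (permE n τ a) (permE n τ b) = permE n τ (iprod a b) := by
  unfold iprod
  rw [length_permE, ha, pairEnc_permE τ ha hb]
  exact park_permE τ _ _ le_rfl (by simp [pairEnc, ha, hb])

lemma exists_permE {n : ℕ} {c c' : List ℕ} (hcl : c.length = n) (hc'l : c'.length = n)
    (hcc : sortW c = sortW c') : ∃ τ : Equiv.Perm (Fin n), permE n τ c = c' := by
  have hperm : c ~ c' :=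
    ((sortW_perm c).symm.trans (hcc ▸ sortW_perm c'))
  set cf : Fin n → ℕ := fun i => c.getD (i : ℕ) 0 with hcf
  set c'f : Fin n → ℕ := fun i => c'.getD (i : ℕ) 0 with hc'f
  set σ₁ := Tuple.sort cf
  set σ₂ := Tuple.sort c'f
  have hsort : List.ofFn (cf ∘ σ₁) = List.ofFn (c'f ∘ σ₂) := by
    have p1 : List.ofFn (cf ∘ σ₁) ~ c := (σ₁.ofFn_comp_perm cf).trans (by rw [ofFn_getD_eq hcl])
    have p2 : List.ofFn (c'f ∘ σ₂) ~ c' := (σ₂.ofFn_comp_perm c'f).trans (by rw [ofFn_getD_eq hc'l])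
    have s1 : (List.ofFn (cf ∘ σ₁)).Pairwise (· ≤ ·) :=
      List.pairwise_ofFn.2 (fun i j hij => Tuple.monotone_sort cf hij.le)
    have s2 : (List.ofFn (c'f ∘ σ₂)).Pairwise (· ≤ ·) :=
      List.pairwise_ofFn.2 (fun i j hij => Tuple.monotone_sort c'f hij.le)
    exact List.Perm.eq_of_pairwise' s1 s2 (p1.trans (hperm.trans p2.symm))
  have hfun : cf ∘ σ₁ = c'f ∘ σ₂ := List.ofFn_injective hsort
  refine ⟨σ₂.symm.trans σ₁, ?_⟩
  apply List.ext_getElem (by simpa using hc'l.symm)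
  intro i h1 h2
  rw [getElem_permE]
  have h3 : i < n := by simpa using h1
  have h4 := congrFun hfun (σ₂.symm ⟨i, h3⟩)
  simp only [Function.comp_apply, Equiv.apply_symm_apply, hcf, hc'f] at h4
  simp only [Equiv.trans_apply]
  exact h4.trans (List.getD_eq_getElem _ _ (by omega))

lemma permE_inv {n : ℕ} (τ : Equiv.Perm (Fin n)) {w : List ℕ} (h : w.length = n) :
    permE n τ.symm (permE n τ w) = w := by
  rw [permE_permE, Equiv.symm_trans_self, permE_refl h]

lemma permE_inv' {n : ℕ} (τ : Equiv.Perm (Fin n)) {w : List ℕ} (h : w.length = n) :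
    permE n τ (permE n τ.symm w) = w := by
  rw [permE_permE, Equiv.self_trans_symm, permE_refl h]

lemma length_of_sortW_eq {a q : List ℕ} (h : sortW a = q) : a.length = q.length := by
  rw [← h]; exact (List.length_mergeSort a).symm

end Aux

/-- For nondecreasing parking functions `π, ρ` of length `n` and parking
functions `c, c'` of length `n` with `c↑ = c'↑`, the number of pairs `(a, b)` of parking
functions with `a↑ = π`, `b↑ = ρ` and `a * b = c` equals the corresponding number for `c'`
(CQSym_n is stable under the internal product). -/
theorem catalan_stable_internal (n : ℕ) (pi rho c c' : List ℕ)
    (hpi : IsPF pi) (hpis : pi.Pairwise (· ≤ ·)) (hpil : pi.length = n)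
    (hrho : IsPF rho) (hrhos : rho.Pairwise (· ≤ ·)) (hrhol : rho.length = n)
    (hc : IsPF c) (hcl : c.length = n) (hc' : IsPF c') (hc'l : c'.length = n)
    (hcc : sortW c = sortW c') :
    {p : List ℕ × List ℕ | IsPF p.1 ∧ IsPF p.2 ∧ sortW p.1 = pi ∧ sortW p.2 = rho ∧
        iprod p.1 p.2 = c}.ncard =
    {p : List ℕ × List ℕ | IsPF p.1 ∧ IsPF p.2 ∧ sortW p.1 = pi ∧ sortW p.2 = rho ∧
        iprod p.1 p.2 = c'}.ncard := by
  obtain ⟨τ, hτ⟩ := exists_permE hcl hc'l hcc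
  have himg : {p : List ℕ × List ℕ | IsPF p.1 ∧ IsPF p.2 ∧ sortW p.1 = pi ∧ sortW p.2 = rho ∧
        iprod p.1 p.2 = c'} =
      (fun p : List ℕ × List ℕ => (permE n τ p.1, permE n τ p.2)) ''
        {p : List ℕ × List ℕ | IsPF p.1 ∧ IsPF p.2 ∧ sortW p.1 = pi ∧ sortW p.2 = rho ∧
        iprod p.1 p.2 = c} := by
    ext ⟨a, b⟩
    simp only [Set.mem_setOf_eq, Set.mem_image, Prod.exists, Prod.mk.injEq]
    constructor
    · rintro ⟨h1, h2, h3, h4, h5⟩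
      have hal : a.length = n := by rw [length_of_sortW_eq h3, hpil]
      have hbl : b.length = n := by rw [length_of_sortW_eq h4, hrhol]
      refine ⟨permE n τ.symm a, permE n τ.symm b, ⟨?_, ?_, ?_, ?_, ?_⟩,
        permE_inv' τ hal, permE_inv' τ hbl⟩
      · exact (IsPF_permE τ.symm hal).2 h1
      · exact (IsPF_permE τ.symm hbl).2 h2
      · rw [sortW_permE τ.symm hal, h3]
      · rw [sortW_permE τ.symm hbl, h4]
      · have : iprod (permE n τ.symm a) (permE n τ.symm b) = permE n τ.symm (iprod a b) :=
          iprod_permE τ.symm hal hbl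
        rw [this, h5, ← hτ, permE_inv τ hcl]
    · rintro ⟨a₀, b₀, ⟨h1, h2, h3, h4, h5⟩, ha, hb⟩
      have hal : a₀.length = n := by rw [length_of_sortW_eq h3, hpil]
      have hbl : b₀.length = n := by rw [length_of_sortW_eq h4, hrhol]
      subst ha hb
      refine ⟨(IsPF_permE τ hal).2 h1, (IsPF_permE τ hbl).2 h2, ?_, ?_, ?_⟩
      · rw [sortW_permE τ hal, h3]
      · rw [sortW_permE τ hbl, h4]
      · rw [iprod_permE τ hal hbl, h5, hτ]
  rw [himg]
  refine (Set.ncard_image_of_injOn ?_).symm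
  rintro ⟨a, b⟩ ⟨h1, h2, h3, h4, h5⟩ ⟨a₂, b₂⟩ ⟨g1, g2, g3, g4, g5⟩ heq
  simp only [Prod.mk.injEq] at heq
  have hal : a.length = n := by rw [length_of_sortW_eq h3, hpil]
  have hbl : b.length = n := by rw [length_of_sortW_eq h4, hrhol]
  have hal2 : a₂.length = n := by rw [length_of_sortW_eq g3, hpil]
  have hbl2 : b₂.length = n := by rw [length_of_sortW_eq g4, hrhol]
  have e1 : a = a₂ := by
    rw [← permE_inv τ hal, ← permE_inv τ hal2, heq.1]
  have e2 : b = b₂ := by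
    rw [← permE_inv τ hbl, ← permE_inv τ hbl2, heq.2]
  rw [e1, e2]
end

section
/- Let 1^m denote the word of length m with all letters 1. For every parking function a of length n, (a * 1^n) * 1^n = a * 1^n; and for every composition (m_1,…,m_r) of n, the multiset { c * 1^n : c ∈ 1^{m_1} ⋒ ⋯ ⋒ 1^{m_r} } equals the multiset 1^{m_1} ⋒ ⋯ ⋒ 1^{m_r} itself. (Hence the map f ↦ f * J_n is a projector onto Sym_n, the span of the products J_{m_1}⋯J_{m_r}.) -/
open List

/-! ### Auxiliary development -/

/-- The canonical "flattening" map: `x ↦ #{y ∈ a : y < x} + 1`. -/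
def gfun (a : List ℕ) (x : ℕ) : ℕ := a.countP (fun y => decide (y < x)) + 1

lemma countP_split (l : List ℕ) {x y : ℕ} (h : x ≤ y) :
    l.countP (fun z => decide (z < y)) =
      l.countP (fun z => decide (z < x)) + l.countP (fun z => decide (x ≤ z ∧ z < y)) := by
  induction l with
  | nil => simp
  | cons a t ih =>
    rw [List.countP_cons, List.countP_cons, List.countP_cons, ih]
    split_ifs <;> simp only [decide_eq_true_eq] at * <;> omega

lemma countP_lt_lower (b : List ℕ) (i : ℕ) (h : i ≤ b.length) :
    i ≤ b.countP (fun z => decide (b.countP (fun l => decide (l < z)) < i)) := by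
  by_contra hc
  push_neg at hc
  have hne : {z : ℕ | z ∈ b ∧ i ≤ b.countP (fun l => decide (l < z))}.Nonempty := by
    by_contra hne
    have hlen : b.countP (fun z => decide (b.countP (fun l => decide (l < z)) < i)) = b.length := by
      rw [List.countP_eq_length]
      intro z hz
      simp only [decide_eq_true_eq]
      by_contra hzi
      exact hne ⟨z, hz, by omega⟩
    omega
  set z0 := sInf {z : ℕ | z ∈ b ∧ i ≤ b.countP (fun l => decide (l < z))} with hz0def
  have hz0 := Nat.sInf_mem hne
  rw [← hz0def] at hz0
  have hmono : b.countP (fun l => decide (l < z0)) ≤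
      b.countP (fun z => decide (b.countP (fun l => decide (l < z)) < i)) := by
    apply List.countP_mono_left
    intro l hl hlz
    simp only [decide_eq_true_eq] at hlz ⊢
    by_contra hli
    have : z0 ≤ l := Nat.sInf_le ⟨hl, by omega⟩
    omega
  have := hz0.2
  omega

/-- The invariant maintained along the parkization of `a.map F`. -/
def InvF (a : List ℕ) (F : ℕ → ℕ) : Prop :=
  (∀ x ∈ a, a.countP (fun y => decide (y < x)) + 1 ≤ F x) ∧
  (∀ x ∈ a, ∀ y ∈ a, x < y →
    F x + a.countP (fun z => decide (x ≤ z ∧ z < y)) ≤ F y)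

lemma dW_gfun (a : List ℕ) : dW (a.map (gfun a)) = (a.map (gfun a)).length + 1 := by
  have hmem := mem_dW_set (a.map (gfun a))
  refine le_antisymm (Nat.sInf_le hmem) (le_csInf ⟨_, hmem⟩ ?_)
  rintro i ⟨hi1, hi2⟩
  by_contra hilt
  push_neg at hilt
  have hile : i ≤ a.length := by
    simp only [List.length_map] at hilt; omega
  have key := countP_lt_lower a i hile
  have hcong : (a.map (gfun a)).countP (fun x => decide (x ≤ i)) =
      a.countP (fun z => decide (gfun a z ≤ i)) := by
    rw [List.countP_map]; rfl
  have hmono : a.countP (fun z => decide (a.countP (fun l => decide (l < z)) < i)) ≤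
      a.countP (fun z => decide (gfun a z ≤ i)) := by
    apply List.countP_mono_left
    intro z _ hz
    simp only [decide_eq_true_eq] at hz ⊢
    simp only [gfun]
    omega
  omega

lemma park_map_eq (a : List ℕ) :
    ∀ N (F : ℕ → ℕ), (a.map F).sum ≤ N → InvF a F →
      park (a.map F) = a.map (gfun a) := by
  intro N
  induction N using Nat.strong_induction_on with
  | _ N ih =>
  rintro F hsum ⟨h1, h2⟩
  by_cases hfix : ∀ x ∈ a, F x = a.countP (fun y => decide (y < x)) + 1
  · have heq : a.map F = a.map (gfun a) := List.map_congr_left (fun x hx => hfix x hx)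
    rw [heq, park, dif_pos (dW_gfun a)]
  · push_neg at hfix
    obtain ⟨X0, hX0a, hX0v⟩ := hfix
    have hTne : {x : ℕ | x ∈ a ∧ a.countP (fun y => decide (y < x)) + 2 ≤ F x}.Nonempty :=
      ⟨X0, hX0a, by have := h1 X0 hX0a; omega⟩
    set X := sInf {x : ℕ | x ∈ a ∧ a.countP (fun y => decide (y < x)) + 2 ≤ F x} with hXdef
    have hX := Nat.sInf_mem hTne
    rw [← hXdef] at hX
    set d := a.countP (fun y => decide (y < X)) + 1 with hddef
    have hXmin : ∀ z ∈ a, z < X → F z = a.countP (fun y => decide (y < z)) + 1 := by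
      intro z hz hzX
      refine le_antisymm ?_ (h1 z hz)
      by_contra hlt
      have : X ≤ z := Nat.sInf_le ⟨hz, by omega⟩
      omega
    have hclaim2 : ∀ z ∈ a, z < X → F z + 1 ≤ d := by
      intro z hz hzX
      have hsplit := countP_split a (le_of_lt hzX)
      have hone : 0 < a.countP (fun w => decide (z ≤ w ∧ w < X)) :=
        List.countP_pos_iff.mpr ⟨z, hz, by simp; omega⟩
      have := hXmin z hz hzX
      omega
    have hup : ∀ y ∈ a, X ≤ y → a.countP (fun w => decide (w < y)) + 2 ≤ F y := by
      intro y hy hXy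
      rcases eq_or_lt_of_le hXy with rfl | hXy'
      · exact hX.2
      · have hsplit := countP_split a (le_of_lt hXy')
        have := h2 X hX.1 y hy hXy'
        have := hX.2
        omega
    have hclaim3 : ∀ z ∈ a, X ≤ z → d + 1 ≤ F z := by
      intro z hz hXz
      have h3 := hup z hz hXz
      have hmono : a.countP (fun y => decide (y < X)) ≤ a.countP (fun w => decide (w < z)) := by
        apply List.countP_mono_left
        intro w _ hw
        simp only [decide_eq_true_eq] at hw ⊢
        omega
      omega
    have hcount : (a.map F).countP (fun x => decide (x ≤ d)) =
        a.countP (fun y => decide (y < X)) := by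
      rw [List.countP_map]
      apply List.countP_congr
      intro z hz
      simp only [Function.comp, decide_eq_true_eq]
      constructor
      · intro hFz
        by_contra hzX
        have := hclaim3 z hz (by omega)
        omega
      · intro hzX
        have := hclaim2 z hz hzX
        omega
    have hd_mem : d ∈ {i | 1 ≤ i ∧ (a.map F).countP (fun x => decide (x ≤ i)) < i} :=
      ⟨by omega, by rw [hcount]; omega⟩
    have hlb : ∀ i ∈ {i | 1 ≤ i ∧ (a.map F).countP (fun x => decide (x ≤ i)) < i}, d ≤ i := by
      rintro i ⟨hi1, hi2⟩
      by_contra hid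
      push_neg at hid
      set b := a.filter (fun z => decide (z < X)) with hbdef
      have hblen : b.length = a.countP (fun y => decide (y < X)) :=
        List.countP_eq_length_filter.symm
      have hkey := countP_lt_lower b i (by omega)
      have hbmem : ∀ z ∈ b, z ∈ a ∧ z < X := by
        intro z hz
        rw [hbdef, List.mem_filter] at hz
        exact ⟨hz.1, by simpa using hz.2⟩
      have hbcount : ∀ z ∈ b, b.countP (fun l => decide (l < z)) =
          a.countP (fun l => decide (l < z)) := by
        intro z hz
        rw [hbdef, List.countP_filter]
        apply List.countP_congr
        intro l _
        simp only [Bool.and_eq_true, decide_eq_true_eq]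
        have := (hbmem z hz).2
        constructor
        · exact fun h => h.1
        · exact fun h => ⟨h, by omega⟩
      have hstep1 : b.countP (fun z => decide (b.countP (fun l => decide (l < z)) < i)) ≤
          b.countP (fun z => decide (F z ≤ i)) := by
        apply List.countP_mono_left
        intro z hz hzi
        simp only [decide_eq_true_eq] at hzi ⊢
        obtain ⟨hza, hzX⟩ := hbmem z hz
        rw [hbcount z hz] at hzi
        have := hXmin z hza hzX
        omega
      have hstep2 : b.countP (fun z => decide (F z ≤ i)) ≤
          (a.map F).countP (fun x => decide (x ≤ i)) := by
        rw [List.countP_map]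
        exact (List.filter_sublist (l := a)).countP_le (p := _)
      omega
    have hdW : dW (a.map F) = d := le_antisymm (Nat.sInf_le hd_mem) (le_csInf ⟨d, hd_mem⟩ hlb)
    have hdne : dW (a.map F) ≠ (a.map F).length + 1 := by
      rw [hdW, List.length_map]
      have hlt : a.countP (fun y => decide (y < X)) < a.length := by
        rcases lt_or_eq_of_le (List.countP_le_length (p := fun y => decide (y < X)) (l := a)) with h | h
        · exact h
        · have := List.countP_eq_length.mp h X hX.1
          simp at this
      omega
    have hsum' := decAbove_sum_lt hdne
    rw [hdW] at hsum'
    have hde : decAbove d (a.map F) = a.map (fun x => if d < F x then F x - 1 else F x) := by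
      rw [decAbove, List.map_map]; rfl
    rw [park, dif_neg hdne]
    simp only [hdW]
    rw [hde]
    rw [hde] at hsum'
    set F' := fun x => if d < F x then F x - 1 else F x with hF'def
    have hF'le : ∀ z, ¬ d < F z → F' z = F z := fun z h => by
      simp only [hF'def]; rw [if_neg h]
    have hF'gt : ∀ z, d < F z → F' z = F z - 1 := fun z h => by
      simp only [hF'def]; rw [if_pos h]
    apply ih ((a.map F').sum) (by omega) F' le_rfl
    constructor
    · intro x hx
      by_cases hxX : x < X
      · have hc2 := hclaim2 x hx hxX
        have heq : F' x = F x := hF'le x (by omega)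
        rw [heq]
        exact h1 x hx
      · have hc3 := hclaim3 x hx (by omega)
        have h3 := hup x hx (by omega)
        have heq : F' x = F x - 1 := hF'gt x (by omega)
        omega
    · intro x hx y hy hxy
      have hxy2 := h2 x hx y hy hxy
      by_cases hdx : d < F x
      · have hdy : d < F y := by
          have : 0 < a.countP (fun z => decide (x ≤ z ∧ z < y)) :=
            List.countP_pos_iff.mpr ⟨x, hx, by simp; omega⟩
          omega
        have e1 : F' x = F x - 1 := hF'gt x hdx
        have e2 : F' y = F y - 1 := hF'gt y hdy
        omega
      · have e1 : F' x = F x := hF'le x hdx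
        by_cases hdy : d < F y
        · have e2 : F' y = F y - 1 := hF'gt y hdy
          have hxX : x < X := by
            by_contra hxX
            have := hclaim3 x hx (by omega)
            omega
          have hFx := hXmin x hx hxX
          have hsplit := countP_split a (le_of_lt hxy)
          have hyup : a.countP (fun w => decide (w < y)) + 2 ≤ F y := by
            by_cases hyX : y < X
            · have := hclaim2 y hy hyX
              omega
            · exact hup y hy (by omega)
          omega
        · have e2 : F' y = F y := hF'le y hdy
          omega

lemma zipWith_replicate_self (f : ℕ → ℕ → ℕ) (c : ℕ) :
    ∀ a : List ℕ, List.zipWith f a (List.replicate a.length c) = a.map (fun x => f x c)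
  | [] => rfl
  | x :: t => by
      simp only [List.length_cons, List.replicate_succ, List.zipWith_cons_cons, List.map_cons]
      rw [zipWith_replicate_self f c t]

/-- Key computation: `a * 1ⁿ = a.map (gfun a)` for any positive word of length `n`. -/
lemma iprod_ones (n : ℕ) (a : List ℕ) (hpos : ∀ x ∈ a, 1 ≤ x) (hlen : a.length = n) :
    iprod a (onesW n) = a.map (gfun a) := by
  have hpe : pairEnc a.length a (onesW n) = a.map (fun x => (x - 1) * n + 1) := by
    rw [pairEnc, onesW, ← hlen, zipWith_replicate_self]
  rw [iprod, hpe]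
  apply park_map_eq a _ _ le_rfl
  constructor
  · intro x hx
    beta_reduce
    by_cases hx1 : x = 1
    · subst hx1
      have : a.countP (fun y => decide (y < 1)) = 0 := by
        rw [List.countP_eq_zero]
        intro y hy
        simp only [decide_eq_true_eq]
        have := hpos y hy
        omega
      omega
    · have hx2 : 2 ≤ x := by have := hpos x hx; omega
      have hle : a.countP (fun y => decide (y < x)) ≤ n := hlen ▸ List.countP_le_length
      have : n ≤ (x - 1) * n := Nat.le_mul_of_pos_left n (by omega)
      omega
  · intro x hx y hy hxy
    beta_reduce
    have hc : a.countP (fun z => decide (x ≤ z ∧ z < y)) ≤ n := hlen ▸ List.countP_le_length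
    have e1 : (x - 1) * n + n = x * n := by
      have : x - 1 + 1 = x := by have := hpos x hx; omega
      calc (x - 1) * n + n = (x - 1 + 1) * n := by rw [Nat.succ_mul]
        _ = x * n := by rw [this]
    have e2 : x * n ≤ (y - 1) * n := Nat.mul_le_mul_right n (by omega)
    omega

lemma gfun_lt_iff (a : List ℕ) {z x : ℕ} (hz : z ∈ a) :
    gfun a z < gfun a x ↔ z < x := by
  constructor
  · intro h
    by_contra hzx
    have : a.countP (fun y => decide (y < x)) ≤ a.countP (fun y => decide (y < z)) := by
      apply List.countP_mono_left
      intro w _ hw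
      simp only [decide_eq_true_eq] at hw ⊢
      omega
    simp only [gfun] at h
    omega
  · intro h
    have hsplit := countP_split a (le_of_lt h)
    have : 0 < a.countP (fun w => decide (z ≤ w ∧ w < x)) :=
      List.countP_pos_iff.mpr ⟨z, hz, by simp; omega⟩
    simp only [gfun]
    omega

lemma shuffles_perm : ∀ (u v w : List ℕ), w ∈ shuffles u v → w.Perm (u ++ v) := by
  intro u v
  induction u, v using shuffles.induct with
  | case1 v =>
    intro w hw
    simp only [shuffles, Multiset.mem_singleton] at hw
    subst hw
    simp
  | case2 x u =>
    intro w hw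
    simp only [shuffles, Multiset.mem_singleton] at hw
    subst hw
    simp
  | case3 x u y v ih1 ih2 =>
    intro w hw
    simp only [shuffles, Multiset.mem_add, Multiset.mem_map] at hw
    rcases hw with ⟨w', hw', rfl⟩ | ⟨w', hw', rfl⟩
    · exact (ih1 w' hw').cons x
    · calc (y :: w') ~ y :: ((x :: u) ++ v) := (ih2 w' hw').cons y
        _ ~ (x :: u) ++ (y :: v) := (List.perm_middle).symm

lemma iter_fixed : ∀ ms : List ℕ, (∀ m ∈ ms, 1 ≤ m) →
    ∀ c ∈ itersShuffle (ms.map onesW),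
      c.length = ms.sum ∧ ∀ x ∈ c, c.countP (fun y => decide (y < x)) + 1 = x := by
  intro ms
  induction ms with
  | nil =>
    intro _ c hc
    simp only [List.map_nil, itersShuffle, Multiset.mem_singleton] at hc
    subst hc
    simp
  | cons m t ih =>
    intro hpos c hc
    simp only [List.map_cons, itersShuffle, Multiset.mem_bind] at hc
    obtain ⟨v, hv, hcv⟩ := hc
    obtain ⟨hvlen, hvfix⟩ := ih (fun m' hm' => hpos m' (List.mem_cons_of_mem _ hm')) v hv
    have hm1 : 1 ≤ m := hpos m List.mem_cons_self
    have hvpos : ∀ z ∈ v, 1 ≤ z := fun z hz => by have := hvfix z hz; omega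
    have hperm : c.Perm (onesW m ++ shiftW m v) := by
      rw [sshuffle] at hcv
      have hlen1 : (onesW m).length = m := by simp [onesW]
      rw [hlen1] at hcv
      exact shuffles_perm _ _ c hcv
    have hcnt : ∀ p : ℕ → Bool, c.countP p = (onesW m).countP p + (shiftW m v).countP p :=
      fun p => by rw [hperm.countP_eq, List.countP_append]
    constructor
    · rw [hperm.length_eq]
      simp [onesW, shiftW, hvlen, List.sum_cons]
    · intro x hx
      have hxmem := hperm.mem_iff.mp hx
      rw [hcnt]
      rcases List.mem_append.mp hxmem with h1 | h2
      · have hx1 : x = 1 := (List.mem_replicate.mp h1).2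
        subst hx1
        have e1 : (onesW m).countP (fun y => decide (y < 1)) = 0 := by
          simp [onesW, List.countP_replicate]
        have e2 : (shiftW m v).countP (fun y => decide (y < 1)) = 0 := by
          rw [shiftW, List.countP_map, List.countP_eq_zero]
          intro z _
          simp only [Function.comp, decide_eq_true_eq]
          omega
        omega
      · rw [shiftW, List.mem_map] at h2
        obtain ⟨z, hzv, rfl⟩ := h2
        have hz1 := hvpos z hzv
        have e1 : (onesW m).countP (fun y => decide (y < z + m)) = m := by
          rw [onesW, List.countP_replicate, if_pos (by simp; omega)]
        have e2 : (shiftW m v).countP (fun y => decide (y < z + m)) =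
            v.countP (fun y => decide (y < z)) := by
          rw [shiftW, List.countP_map]
          apply List.countP_congr
          intro w _
          simp only [Function.comp, decide_eq_true_eq]
          omega
        have := hvfix z hzv
        omega

/-- `(a * 1ⁿ) * 1ⁿ = a * 1ⁿ` for every `a ∈ PF_n`, and for every
composition `(m₁, …, m_r)` of `n`, the multiset `{c * 1ⁿ : c ∈ 1^{m₁} ⋒ ⋯ ⋒ 1^{m_r}}`
equals `1^{m₁} ⋒ ⋯ ⋒ 1^{m_r}` itself (so `f ↦ f * J_n` is a projector onto `Sym_n`). -/
theorem star_Jn_projector (n : ℕ) :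
    (∀ a : List ℕ, IsPF a → a.length = n →
        iprod (iprod a (onesW n)) (onesW n) = iprod a (onesW n)) ∧
    (∀ ms : List ℕ, (∀ m ∈ ms, 1 ≤ m) → ms.sum = n →
        (itersShuffle (ms.map onesW)).map (fun c => iprod c (onesW n))
          = itersShuffle (ms.map onesW)) := by
  constructor
  · rintro a ⟨hpos, -⟩ hlen
    have h1 := iprod_ones n a hpos hlen
    set b := a.map (gfun a) with hbdef
    have hbpos : ∀ x ∈ b, 1 ≤ x := by
      rintro x hx
      obtain ⟨z, hz, rfl⟩ := List.mem_map.mp hx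
      simp [gfun]
    have hblen : b.length = n := by rw [hbdef, List.length_map, hlen]
    have h2 := iprod_ones n b hbpos hblen
    rw [h1, h2]
    conv_rhs => rw [← List.map_id b]
    apply List.map_congr_left
    rintro y hy
    obtain ⟨x, hx, rfl⟩ := List.mem_map.mp hy
    show gfun b (gfun a x) = gfun a x
    have hcnt : b.countP (fun w => decide (w < gfun a x)) =
        a.countP (fun z => decide (z < x)) := by
      rw [hbdef, List.countP_map]
      apply List.countP_congr
      intro z hz
      simp only [Function.comp, decide_eq_true_eq]
      exact gfun_lt_iff a hz
    rw [gfun, hcnt]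
    rfl
  · intro ms hms hsum
    conv_rhs => rw [← Multiset.map_id (itersShuffle (ms.map onesW))]
    apply Multiset.map_congr rfl
    intro c hc
    obtain ⟨hclen, hcfix⟩ := iter_fixed ms hms c hc
    have hcpos : ∀ x ∈ c, 1 ≤ x := fun x hx => by have := hcfix x hx; omega
    rw [iprod_ones n c hcpos (by rw [hclen, hsum])]
    show List.map (gfun c) c = c
    conv_rhs => rw [← List.map_id c]
    apply List.map_congr_left
    intro x hx
    show gfun c x = x
    rw [gfun, hcfix x hx]
end

section
/- For every word w of length n over the positive integers and every 0 ≤ k ≤ n, one has Park(Park(w)_1⋯Park(w)_k) = Park(w_1⋯w_k) and Park(Park(w)_{k+1}⋯Park(w)_n) = Park(w_{k+1}⋯w_n); i.e. the parkizations of the prefix and suffix of a word coincide with the parkizations of the corresponding prefix and suffix of its parkization. (This is the combinatorial content of the fact that the polynomials G_a(A) = Σ_{Park(w)=a} w realize the algebra PQSym*, i.e. satisfy G_{a'}(A) G_{a''}(A) = Σ_{a ∈ a' * a''} G_a(A).) -/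
open List

-- ==================== auxiliary lemmas ====================

lemma park_of_eq {w : List ℕ} (h : dW w = w.length + 1) : park w = w := by
  rw [park, dif_pos h]

lemma park_of_ne {w : List ℕ} (h : dW w ≠ w.length + 1) :
    park w = park (decAbove (dW w) w) := by
  rw [park, dif_neg h]

lemma length_decAbove (d : ℕ) (w : List ℕ) : (decAbove d w).length = w.length := by
  simp [decAbove]

lemma countP_decAbove_lt {d i : ℕ} (h : i < d) (u : List ℕ) :
    (decAbove d u).countP (fun x => decide (x ≤ i)) = u.countP (fun x => decide (x ≤ i)) := by
  unfold decAbove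
  rw [List.countP_map]
  apply List.countP_congr
  intro x _
  simp only [Function.comp]
  split <;> simp <;> omega

lemma countP_decAbove_ge {d i : ℕ} (h : d ≤ i) (u : List ℕ) :
    (decAbove d u).countP (fun x => decide (x ≤ i)) = u.countP (fun x => decide (x ≤ i + 1)) := by
  unfold decAbove
  rw [List.countP_map]
  apply List.countP_congr
  intro x _
  simp only [Function.comp]
  split <;> simp <;> omega

lemma one_le_dW (w : List ℕ) : 1 ≤ dW w :=
  (Nat.sInf_mem (⟨_, mem_dW_set w⟩ : Set.Nonempty _)).1

lemma countP_dW_lt (w : List ℕ) : w.countP (fun x => decide (x ≤ dW w)) < dW w :=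
  (Nat.sInf_mem (⟨_, mem_dW_set w⟩ : Set.Nonempty _)).2

lemma dW_le {w : List ℕ} {d : ℕ} (h1 : 1 ≤ d)
    (h2 : w.countP (fun x => decide (x ≤ d)) < d) : dW w ≤ d :=
  Nat.sInf_le ⟨h1, h2⟩

lemma le_countP_of_lt_dW {w : List ℕ} {i : ℕ} (h : i < dW w) :
    i ≤ w.countP (fun x => decide (x ≤ i)) := by
  by_contra h'
  have h1 : 1 ≤ i := by omega
  have := dW_le (w := w) (d := i) h1 (by omega)
  omega

lemma decAbove_eq_self {d : ℕ} {u : List ℕ} (h : ∀ x ∈ u, x ≤ d) : decAbove d u = u := by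
  unfold decAbove
  conv_rhs => rw [← List.map_id u]
  exact List.map_congr_left fun x hx => by simp [Nat.not_lt.mpr (h x hx)]

lemma decAbove_comm {e d : ℕ} (h : e < d) (u : List ℕ) :
    decAbove e (decAbove d u) = decAbove (d - 1) (decAbove e u) := by
  unfold decAbove
  rw [List.map_map, List.map_map]
  apply List.map_congr_left
  intro x _
  simp only [Function.comp]
  split_ifs <;> omega

lemma pos_decAbove {d : ℕ} {u : List ℕ} (hd : 1 ≤ d) (h : ∀ x ∈ u, 1 ≤ x) :
    ∀ x ∈ decAbove d u, 1 ≤ x := by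
  intro x hx
  unfold decAbove at hx
  obtain ⟨y, hy, rfl⟩ := List.mem_map.mp hx
  have := h y hy
  split <;> omega

lemma dW_ne_of_exists {u : List ℕ} {d : ℕ} (hed : dW u ≤ d)
    (hx : ∃ x ∈ u, d < x) : dW u ≠ u.length + 1 := by
  intro he
  obtain ⟨x, hxu, hdx⟩ := hx
  have hc : u.length ≤ u.countP (fun x => decide (x ≤ u.length)) :=
    le_countP_of_lt_dW (by omega)
  have hc2 : u.countP (fun x => decide (x ≤ u.length)) ≤ u.length := List.countP_le_length
  have : ∀ a ∈ u, a ≤ u.length := by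
    intro a ha
    have := List.countP_eq_length.mp (le_antisymm hc2 hc) a ha
    simpa using this
  have := this x hxu
  omega

/-- Main step lemma: under the gap condition `K`, decrementing above `d` preserves `park`. -/
lemma park_decAbove_of_K (u : List ℕ) (d : ℕ) (hd : 1 ≤ d) (hpos : ∀ x ∈ u, 1 ≤ x)
    (hK : ∀ i < d, u.countP (fun x => decide (x ≤ d)) + i < d + u.countP (fun x => decide (x ≤ i))) :
    park (decAbove d u) = park u := by
  by_cases hx : ∃ x ∈ u, d < x
  · -- some letter above d
    set e := dW u with he
    clear_value e
    have hcu0 : u.countP (fun x => decide (x ≤ 0)) = 0 := by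
      rw [List.countP_eq_zero]
      intro a ha
      have := hpos a ha
      simp; omega
    have hcud : u.countP (fun x => decide (x ≤ d)) < d := by
      have := hK 0 (by omega)
      omega
    have hed : e ≤ d := by rw [he]; exact dW_le hd hcud
    have he1 : 1 ≤ e := by rw [he]; exact one_le_dW u
    have hne : dW u ≠ u.length + 1 := dW_ne_of_exists (dW_le hd hcud) hx
    rcases eq_or_lt_of_le hed with heq | hlt
    · -- e = d : unfolding park u directly
      rw [park_of_ne hne, ← he, heq]
    · -- e < d
      have hcue : u.countP (fun x => decide (x ≤ e)) < e := by rw [he]; exact countP_dW_lt u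
      -- dW (decAbove d u) = e
      have hdW' : dW (decAbove d u) = e := by
        apply Nat.le_antisymm
        · apply dW_le he1
          rw [countP_decAbove_lt hlt]
          exact hcue
        · by_contra hcon
          push_neg at hcon
          set i := dW (decAbove d u) with hi
          have hi1 : 1 ≤ i := one_le_dW _
          have hic : (decAbove d u).countP (fun x => decide (x ≤ i)) < i := countP_dW_lt _
          rw [countP_decAbove_lt (by omega)] at hic
          have := le_countP_of_lt_dW (w := u) (i := i) (by omega)
          omega
      have hne' : dW (decAbove d u) ≠ (decAbove d u).length + 1 := by
        rw [hdW', length_decAbove]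
        omega
      -- w' = decAbove e u
      have hstep1 : park u = park (decAbove e u) := by rw [park_of_ne hne, ← he]
      have hstep2 : park (decAbove d u) = park (decAbove e (decAbove d u)) := by
        rw [park_of_ne hne', hdW']
      have hstep3 : decAbove e (decAbove d u) = decAbove (d - 1) (decAbove e u) :=
        decAbove_comm hlt u
      -- apply induction to w' with d - 1
      have hsum : (decAbove e u).sum < u.sum := by
        have := decAbove_sum_lt hne
        rwa [← he] at this
      have hKnew : ∀ i < d - 1, (decAbove e u).countP (fun x => decide (x ≤ d - 1)) + i <
          (d - 1) + (decAbove e u).countP (fun x => decide (x ≤ i)) := by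
        intro i hi
        have hcd : (decAbove e u).countP (fun x => decide (x ≤ d - 1)) =
            u.countP (fun x => decide (x ≤ d)) := by
          have hd1 : d - 1 + 1 = d := by omega
          rw [countP_decAbove_ge (by omega), hd1]
        rw [hcd]
        by_cases hie : i < e
        · -- small i : use c_u(d) ≤ d - 2
          rw [countP_decAbove_lt hie]
          have h1 := hK e hlt
          have h2 := le_countP_of_lt_dW (w := u) (i := i) (by omega)
          omega
        · -- i ≥ e
          rw [countP_decAbove_ge (by omega)]
          have := hK (i + 1) (by omega)
          omega
      have hrec := park_decAbove_of_K (decAbove e u) (d - 1) (by omega)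
        (pos_decAbove he1 hpos) hKnew
      rw [hstep2, hstep3, hrec, ← hstep1]
  · push_neg at hx
    rw [decAbove_eq_self (fun x h => by have := hx x h; omega)]
termination_by u.sum

lemma K_of_part {w u v : List ℕ}
    (hsplit : ∀ i : ℕ, u.countP (fun x => decide (x ≤ i)) + v.countP (fun x => decide (x ≤ i)) =
      w.countP (fun x => decide (x ≤ i))) :
    ∀ i < dW w, u.countP (fun x => decide (x ≤ dW w)) + i <
      dW w + u.countP (fun x => decide (x ≤ i)) := by
  intro i hi
  have hcw : w.countP (fun x => decide (x ≤ dW w)) < dW w := countP_dW_lt w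
  have hmin : i ≤ w.countP (fun x => decide (x ≤ i)) := le_countP_of_lt_dW hi
  have h1 := hsplit i
  have h2 := hsplit (dW w)
  have hmono : v.countP (fun x => decide (x ≤ i)) ≤ v.countP (fun x => decide (x ≤ dW w)) := by
    apply List.countP_mono_left
    intro x _ hxi
    simp at hxi ⊢
    omega
  omega

lemma split_take_drop (w : List ℕ) (k : ℕ) : ∀ i : ℕ,
    (w.take k).countP (fun x => decide (x ≤ i)) + (w.drop k).countP (fun x => decide (x ≤ i)) =
      w.countP (fun x => decide (x ≤ i)) := by
  intro i
  rw [← List.countP_append, List.take_append_drop]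

theorem park_prefix_suffix' (w : List ℕ) (hw : ∀ x ∈ w, 1 ≤ x)
    (k : ℕ) :
    park ((park w).take k) = park (w.take k) ∧
      park ((park w).drop k) = park (w.drop k) := by
  by_cases h : dW w = w.length + 1
  · rw [park_of_eq h]
    exact ⟨rfl, rfl⟩
  · have hd1 : 1 ≤ dW w := one_le_dW w
    have hpark : park w = park (decAbove (dW w) w) := park_of_ne h
    have hsum : (decAbove (dW w) w).sum < w.sum := decAbove_sum_lt h
    have IH := park_prefix_suffix' (decAbove (dW w) w) (pos_decAbove hd1 hw) k
    have ht : (decAbove (dW w) w).take k = decAbove (dW w) (w.take k) := by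
      unfold decAbove
      rw [List.map_take]
    have hdr : (decAbove (dW w) w).drop k = decAbove (dW w) (w.drop k) := by
      unfold decAbove
      rw [List.map_drop]
    have hKt := K_of_part (w := w) (split_take_drop w k)
    have hKd := K_of_part (w := w) (u := w.drop k) (v := w.take k)
      (fun i => by have := split_take_drop w k i; omega)
    constructor
    · rw [hpark, IH.1, ht,
        park_decAbove_of_K (w.take k) (dW w) hd1 (fun x hx => hw x (w.take_subset k hx)) hKt]
    · rw [hpark, IH.2, hdr,
        park_decAbove_of_K (w.drop k) (dW w) hd1 (fun x hx => hw x (w.drop_subset k hx)) hKd]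
termination_by w.sum

/-- for every word `w` over the positive integers and `0 ≤ k ≤ |w|`,
the parkizations of the prefix and suffix of `w` coincide with the parkizations of the
corresponding prefix and suffix of `Park(w)`. -/
theorem park_prefix_suffix (w : List ℕ) (hw : ∀ x ∈ w, 1 ≤ x)
    (k : ℕ) (hk : k ≤ w.length) :
    park ((park w).take k) = park (w.take k) ∧
      park ((park w).drop k) = park (w.drop k) :=
  park_prefix_suffix' w hw k
end
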